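/- Let F be a finite field with gcd(n, q) = 1, λ ∈ F^×, R_λ = F[X]/⟨Xⁿ − λ⟩, 0 ≤ h < ℓ with λ^{1+p^h} = 1. Let C = C_{a,0} ⊕ C_{0,a'} ⊕ C_{b,bg} be a 2-quasi λ-constacyclic code, where a, a', b ∈ R_λ with ab = a'b = 0 and g a unit of the ideal C_b = R_λb. Then C is Galois p^h-self-dual if and only if dim_F C = n and a·a* = a'·(a')* = a·b* = a*·b = a'·b* = (a')*·b = b·b*·(1 + g·g*) = 0, where * is the p^h-semilinear automorphism of R_λ given by a(X) ↦ a^{(p^h)}(X^{nt−1}) mod (Xⁿ − λ). -/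

import Mathlib

open Polynomial
set_option linter.unusedSectionVars false
set_option maxHeartbeats 1000000

/-- The quotient ring `R_λ = F[X]/⟨Xⁿ − λ⟩`. -/
abbrev Rlam (F : Type*) [Field F] (n : ℕ) (lam : F) :=
  F[X] ⧸ Ideal.span {(X : F[X]) ^ n - C lam}

/-- The Galois inner product `⟨a,b⟩ = ∑ aᵢ bᵢ^e` on `Fⁿ × Fⁿ`, where `e = p^h`. -/
def gin {F : Type*} [Field F] {n : ℕ} (e : ℕ)
    (a b : (Fin n → F) × (Fin n → F)) : F :=
  (∑ i, a.1 i * b.1 i ^ e) + (∑ i, a.2 i * b.2 i ^ e)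

namespace Stmt18

variable {F : Type*} [Field F] {n : ℕ} [NeZero n] {lam : F} {p h : ℕ}

lemma npos : 0 < n := Nat.pos_of_ne_zero (NeZero.ne n)

/-! ### quotient ring basics -/

lemma mk_X_pow (lam : F) (m : ℕ) :
    Ideal.Quotient.mk (Ideal.span {(X : F[X]) ^ n - C lam}) (X ^ m) =
      Ideal.Quotient.mk _ (C (lam ^ (m / n)) * X ^ (m % n)) := by
  rw [Ideal.Quotient.eq, Ideal.mem_span_singleton]
  have h1 : (X : F[X]) ^ m = X ^ (m % n) * ((X : F[X]) ^ n) ^ (m / n) := by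
    rw [← pow_mul, ← pow_add, Nat.mod_add_div]
  have h2 : (X : F[X]) ^ m - C (lam ^ (m / n)) * X ^ (m % n)
      = X ^ (m % n) * (((X : F[X]) ^ n) ^ (m / n) - (C lam) ^ (m / n)) := by
    rw [h1, map_pow]; ring
  rw [h2]
  exact Dvd.dvd.mul_left (sub_dvd_pow_sub_pow _ _ _) _

/-- basis coordinate vector of `X^s` in `R`. -/
noncomputable def bvec (lam : F) (n : ℕ) [NeZero n] (s : ℕ) : Fin n → F :=
  Pi.single ⟨s % n, Nat.mod_lt _ npos⟩ (lam ^ (s / n))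

lemma bvec_apply_zero (s : ℕ) :
    bvec lam n s 0 = if s % n = 0 then lam ^ (s / n) else 0 := by
  rw [bvec, Pi.single_apply]
  congr 1
  simp [Fin.ext_iff, eq_comm]

variable (ι : (Fin n → F) ≃ₗ[F] Rlam F n lam)
variable (hι : ∀ v : Fin n → F,
      ι v = Ideal.Quotient.mk _ (∑ i : Fin n, C (v i) * (X : F[X]) ^ (i : ℕ)))

include hι in
lemma mk_single (c : F) (r : Fin n) :
    Ideal.Quotient.mk (Ideal.span {(X : F[X]) ^ n - C lam}) (C c * X ^ (r : ℕ)) =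
      ι (Pi.single r c) := by
  rw [hι]
  congr 1
  rw [Finset.sum_eq_single r]
  · rw [Pi.single_eq_same]
  · intro i _ hi
    rw [Pi.single_eq_of_ne hi, map_zero, zero_mul]
  · intro hr; exact absurd (Finset.mem_univ r) hr

include hι in
lemma coord (s : ℕ) :
    Ideal.Quotient.mk (Ideal.span {(X : F[X]) ^ n - C lam}) ((X : F[X]) ^ s) =
      ι (bvec lam n s) := by
  rw [mk_X_pow, bvec]
  exact mk_single ι hι (lam ^ (s / n)) ⟨s % n, Nat.mod_lt _ npos⟩

include hι in
lemma coord' (s : ℕ) :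
    ι.symm (Ideal.Quotient.mk (Ideal.span {(X : F[X]) ^ n - C lam}) ((X : F[X]) ^ s)) =
      bvec lam n s := by
  rw [coord ι hι s, LinearEquiv.symm_apply_apply]

lemma smul_mk (c : F) (f : F[X]) :
    c • (Ideal.Quotient.mk (Ideal.span {(X : F[X]) ^ n - C lam}) f) =
      Ideal.Quotient.mk _ (C c * f) := by
  rw [← smul_eq_C_mul]
  rfl

include hι in
lemma expand (w : Fin n → F) :
    ι w = ∑ j : Fin n, w j •
      Ideal.Quotient.mk (Ideal.span {(X : F[X]) ^ n - C lam}) ((X : F[X]) ^ (j : ℕ)) := by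
  rw [hι, map_sum]
  exact Finset.sum_congr rfl fun j _ => (smul_mk (w j) _).symm

/-! ### characteristic and arithmetic -/

lemma charP_of_card {p ℓ : ℕ} [Fintype F] (hp : p.Prime) (hcard : Fintype.card F = p ^ ℓ)
    (hl : ℓ ≠ 0) : CharP F p := by
  have h0 : ((Fintype.card F : ℕ) : F) = 0 := FiniteField.cast_card_eq_zero F
  rw [hcard] at h0
  push_cast at h0
  exact (CharP.charP_iff_prime_eq_zero hp).mpr (pow_eq_zero_iff hl |>.mp h0)

lemma nat_diag (t : ℕ) (ht : 0 < t) (i : ℕ) : i + (n * t - 1) * i = n * (t * i) := by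
  have h1 : n * t - 1 + 1 = n * t :=
    Nat.succ_pred_eq_of_pos (Nat.mul_pos npos ht)
  calc i + (n * t - 1) * i = (n * t - 1 + 1) * i := by ring
    _ = n * (t * i) := by rw [h1, mul_assoc]

lemma nat_off {t : ℕ} (ht : 0 < t) {i j : Fin n}
    (hd : ((i : ℕ) + (n * t - 1) * (j : ℕ)) % n = 0) : i = j := by
  have hd' : (n : ℕ) ∣ (i : ℕ) + (n * t - 1) * (j : ℕ) := Nat.dvd_of_mod_eq_zero hd
  have hz : (((i : ℕ) + (n * t - 1) * (j : ℕ) : ℕ) : ZMod n) = 0 :=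
    (ZMod.natCast_eq_zero_iff _ n).mpr hd'
  have hnt : 1 ≤ n * t := Nat.mul_pos npos ht
  rw [Nat.cast_add, Nat.cast_mul, Nat.cast_sub hnt] at hz
  rw [Nat.cast_mul, ZMod.natCast_self, zero_mul, Nat.cast_one, zero_sub] at hz
  have h2 : ((i : ℕ) : ZMod n) = ((j : ℕ) : ZMod n) := by linear_combination hz
  have hv : (i : ℕ) = (j : ℕ) := by
    have := congrArg ZMod.val h2
    rwa [ZMod.val_cast_of_lt i.isLt, ZMod.val_cast_of_lt j.isLt] at this
  exact Fin.ext hv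

lemma nat_shift {r : ℕ} (hr : r < n) (j : Fin n) :
    ((r + (j : ℕ)) % n = 0) ↔ (j : ℕ) = (n - r) % n := by
  have hj := j.isLt
  have hmod : (n - r) % n = if r = 0 then 0 else n - r := by
    split
    · next hr0 => subst hr0; simp
    · exact Nat.mod_eq_of_lt (by omega)
  rw [hmod]
  constructor
  · intro h0
    obtain ⟨c, hc⟩ := Nat.dvd_of_mod_eq_zero h0
    have hc2 : c < 2 := by
      by_contra hcge
      push_neg at hcge
      have : n * 2 ≤ n * c := Nat.mul_le_mul_left n hcge
      omega
    interval_cases c <;> split <;> omega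
  · intro hjv
    split at hjv
    · have hz : r + (j : ℕ) = 0 := by omega
      rw [hz]; exact Nat.zero_mod n
    · have hz : r + (j : ℕ) = n := by omega
      rw [hz, Nat.mod_self]

lemma nat_inv {k : ℕ} (hk : k < n) : (n - (n - k) % n) % n = k := by
  rcases Nat.eq_zero_or_pos k with hk0 | hk0
  · subst hk0; simp
  · rw [Nat.mod_eq_of_lt (by omega : n - k < n), Nat.mod_eq_of_lt (by omega : n - (n - k) < n)]
    omega

lemma nat_twist {t r : ℕ} (ht : 0 < t) (hr : r < n) :
    ((n * t - 1) * ((n - r) % n)) % n = r := by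
  have hval : ((((n * t - 1) * ((n - r) % n) : ℕ)) : ZMod n).val
      = ((n * t - 1) * ((n - r) % n)) % n := ZMod.val_natCast _ _
  have hnt : 1 ≤ n * t := Nat.mul_pos npos ht
  have hcast : ((((n * t - 1) * ((n - r) % n) : ℕ)) : ZMod n) = ((r : ℕ) : ZMod n) := by
    rw [Nat.cast_mul, Nat.cast_sub hnt, ZMod.natCast_mod, Nat.cast_sub hr.le,
      Nat.cast_mul, ZMod.natCast_self, zero_mul, zero_sub, Nat.cast_one]
    ring
  rw [hcast, ZMod.val_natCast, Nat.mod_eq_of_lt hr] at hval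
  omega

/-! ### σ as a ring homomorphism -/

noncomputable def phF (p h : ℕ) {F : Type*} [Field F]
    (hφ : ∀ x y : F, (x + y) ^ p ^ h = x ^ p ^ h + y ^ p ^ h) (hp0 : p ^ h ≠ 0) :
    F →+* F where
  toFun := fun x => x ^ p ^ h
  map_one' := one_pow _
  map_mul' := fun x y => mul_pow x y _
  map_zero' := zero_pow hp0
  map_add' := hφ

noncomputable def PhiH (n : ℕ) (lam : F)
    (hφ : ∀ x y : F, (x + y) ^ p ^ h = x ^ p ^ h + y ^ p ^ h) (hp0 : p ^ h ≠ 0) :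
    F[X] →+* Rlam F n lam :=
  (Ideal.Quotient.mk _).comp
    (eval₂RingHom (C.comp (phF p h hφ hp0)) ((X : F[X]) ^ (n * orderOf lam - 1)))

variable (σ : Rlam F n lam → Rlam F n lam)
variable (hσ : ∀ f : F[X],
      σ (Ideal.Quotient.mk _ f) =
        Ideal.Quotient.mk _
          (f.sum fun i a => C (a ^ p ^ h) * X ^ ((n * orderOf lam - 1) * i)))
variable (hφ : ∀ x y : F, (x + y) ^ p ^ h = x ^ p ^ h + y ^ p ^ h)
variable (hp0 : p ^ h ≠ 0)

include hσ hφ hp0 in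
lemma sigma_eq (f : F[X]) : σ (Ideal.Quotient.mk _ f) = PhiH n lam hφ hp0 f := by
  rw [hσ, PhiH, RingHom.comp_apply, coe_eval₂RingHom, eval₂_eq_sum]
  congr 1
  rw [Polynomial.sum_def, Polynomial.sum_def]
  refine Finset.sum_congr rfl fun i _ => ?_
  rw [← pow_mul]
  rfl

include hσ hφ hp0 in
lemma sigma_mul (x y : Rlam F n lam) : σ (x * y) = σ x * σ y := by
  obtain ⟨f, rfl⟩ := Ideal.Quotient.mk_surjective x
  obtain ⟨g, rfl⟩ := Ideal.Quotient.mk_surjective y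
  rw [← map_mul, sigma_eq σ hσ hφ hp0, sigma_eq σ hσ hφ hp0, sigma_eq σ hσ hφ hp0, map_mul]

include hσ hφ hp0 in
lemma sigma_add (x y : Rlam F n lam) : σ (x + y) = σ x + σ y := by
  obtain ⟨f, rfl⟩ := Ideal.Quotient.mk_surjective x
  obtain ⟨g, rfl⟩ := Ideal.Quotient.mk_surjective y
  rw [← map_add, sigma_eq σ hσ hφ hp0, sigma_eq σ hσ hφ hp0, sigma_eq σ hσ hφ hp0, map_add]

include hσ hφ hp0 in
lemma sigma_zero : σ 0 = 0 := by
  have := sigma_eq σ hσ hφ hp0 0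
  rwa [map_zero, map_zero] at this

include hσ hφ hp0 in
lemma sigma_C (c : F) :
    σ (Ideal.Quotient.mk _ (C c)) = Ideal.Quotient.mk _ (C (c ^ p ^ h)) := by
  rw [sigma_eq σ hσ hφ hp0, PhiH, RingHom.comp_apply, coe_eval₂RingHom, eval₂_C]
  rfl

include hσ hφ hp0 in
lemma sigma_X_pow (k : ℕ) :
    σ (Ideal.Quotient.mk _ ((X : F[X]) ^ k)) =
      Ideal.Quotient.mk _ ((X : F[X]) ^ ((n * orderOf lam - 1) * k)) := by
  rw [sigma_eq σ hσ hφ hp0, PhiH, RingHom.comp_apply, coe_eval₂RingHom, eval₂_X_pow,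
    ← pow_mul]

include hσ hφ hp0 in
lemma sigma_smul (c : F) (x : Rlam F n lam) : σ (c • x) = c ^ p ^ h • σ x := by
  obtain ⟨f, rfl⟩ := Ideal.Quotient.mk_surjective x
  have h1 : c • Ideal.Quotient.mk (Ideal.span {(X : F[X]) ^ n - C lam}) f =
      Ideal.Quotient.mk _ (C c * f) := by rw [← smul_eq_C_mul]; rfl
  rw [h1, map_mul, sigma_mul σ hσ hφ hp0, sigma_C σ hσ hφ hp0]
  obtain ⟨gg, hgg⟩ := Ideal.Quotient.mk_surjective
    (σ (Ideal.Quotient.mk (Ideal.span {(X : F[X]) ^ n - C lam}) f))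
  rw [← hgg, ← map_mul, ← smul_eq_C_mul]
  rfl

/-! ### key computations -/

include hι hσ hφ hp0 in
lemma sigma_iota (w : Fin n → F) :
    σ (ι w) = ∑ j : Fin n, (w j ^ p ^ h) •
      Ideal.Quotient.mk (Ideal.span {(X : F[X]) ^ n - C lam})
        ((X : F[X]) ^ ((n * orderOf lam - 1) * (j : ℕ))) := by
  rw [hι, sigma_eq σ hσ hφ hp0, map_sum]
  refine Finset.sum_congr rfl fun j _ => ?_
  rw [map_mul, map_pow]
  have h1 : PhiH (p := p) (h := h) n lam hφ hp0 (C (w j)) =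
      Ideal.Quotient.mk _ (C (w j ^ p ^ h)) := by
    rw [PhiH, RingHom.comp_apply, coe_eval₂RingHom, eval₂_C]; rfl
  have h2 : PhiH (p := p) (h := h) n lam hφ hp0 X =
      Ideal.Quotient.mk _ ((X : F[X]) ^ (n * orderOf lam - 1)) := by
    rw [PhiH, RingHom.comp_apply, coe_eval₂RingHom, eval₂_X]
  rw [h1, h2, ← map_pow, ← pow_mul, ← map_mul, ← smul_eq_C_mul]
  rfl

include hι hσ hφ hp0 in
lemma key1 (ht : 0 < orderOf lam) (hl1 : lam ^ orderOf lam = 1) (v w : Fin n → F) :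
    ι.symm (ι v * σ (ι w)) 0 = ∑ i, v i * w i ^ p ^ h := by
  rw [sigma_iota ι hι σ hσ hφ hp0 w, expand ι hι v, Finset.sum_mul_sum]
  have hterm : ∀ i j : Fin n,
      (v i • Ideal.Quotient.mk (Ideal.span {(X : F[X]) ^ n - C lam}) ((X:F[X]) ^ (i:ℕ))) *
        ((w j ^ p ^ h) • Ideal.Quotient.mk (Ideal.span {(X : F[X]) ^ n - C lam})
          ((X:F[X]) ^ ((n * orderOf lam - 1) * (j:ℕ)))) =
      (v i * w j ^ p ^ h) • Ideal.Quotient.mk (Ideal.span {(X : F[X]) ^ n - C lam})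
          ((X:F[X]) ^ ((i:ℕ) + (n * orderOf lam - 1) * (j:ℕ))) := by
    intro i j
    rw [smul_mul_assoc, mul_smul_comm, smul_smul, ← map_mul, ← pow_add]
  simp only [hterm]
  simp only [map_sum, map_smul, coord' ι hι, Finset.sum_apply, Pi.smul_apply, smul_eq_mul,
    bvec_apply_zero]
  refine Finset.sum_congr rfl fun i _ => ?_
  rw [Finset.sum_eq_single i]
  · rw [nat_diag (orderOf lam) ht (i : ℕ), if_pos (Nat.mul_mod_right n _),
      Nat.mul_div_cancel_left _ npos, pow_mul, hl1, one_pow, mul_one]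
  · intro j _ hj
    rw [if_neg, mul_zero]
    intro hcond
    exact hj (nat_off ht hcond).symm
  · intro hi; exact absurd (Finset.mem_univ i) hi

include hι in
lemma nondeg (hlam : lam ≠ 0) (z : Rlam F n lam)
    (h0 : ∀ r : ℕ, r < n →
      ι.symm (Ideal.Quotient.mk (Ideal.span {(X : F[X]) ^ n - C lam}) ((X:F[X])^r) * z) 0 = 0) :
    z = 0 := by
  have hz : z = ι (ι.symm z) := (ι.apply_symm_apply z).symm
  have hw : ∀ k : Fin n, ι.symm z k = 0 := by
    intro k
    have hr : (n - (k : ℕ)) % n < n := Nat.mod_lt _ npos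
    have h1 := h0 ((n - (k : ℕ)) % n) hr
    set r := (n - (k : ℕ)) % n with hrdef
    rw [hz, expand ι hι (ι.symm z), Finset.mul_sum] at h1
    simp only [mul_smul_comm, ← map_mul, ← pow_add] at h1
    simp only [map_sum, map_smul, coord' ι hι, Finset.sum_apply, Pi.smul_apply, smul_eq_mul,
      bvec_apply_zero] at h1
    rw [Finset.sum_eq_single k] at h1
    · rw [if_pos] at h1
      · rcases mul_eq_zero.mp h1 with h2 | h2
        · exact h2
        · exact absurd h2 (pow_ne_zero _ hlam)
      · rw [nat_shift hr k]
        exact (nat_inv k.isLt).symm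
    · intro j _ hj
      rw [if_neg, mul_zero]
      intro hcond
      apply hj
      apply Fin.ext
      rw [(nat_shift hr j).mp hcond, hrdef, nat_inv k.isLt]
    · intro hk; exact absurd (Finset.mem_univ k) hk
  have : ι.symm z = 0 := funext hw
  rw [hz, this, map_zero]

include hι hσ hφ hp0 in
lemma key2 (ht : 0 < orderOf lam) (hl1 : lam ^ orderOf lam = 1)
    (x x' y y' : Rlam F n lam) :
    gin (p ^ h) (ι.symm x, ι.symm x') (ι.symm y, ι.symm y') =
      ι.symm (x * σ y + x' * σ y') 0 := by
  have h1 := key1 ι hι σ hσ hφ hp0 ht hl1 (ι.symm x) (ι.symm y)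
  have h2 := key1 ι hι σ hσ hφ hp0 ht hl1 (ι.symm x') (ι.symm y')
  simp only [LinearEquiv.apply_symm_apply] at h1 h2
  rw [gin, ← h1, ← h2, map_add, Pi.add_apply]



noncomputable def dotB (F : Type*) [Field F] (n : ℕ) :
    LinearMap.BilinForm F ((Fin n → F) × (Fin n → F)) :=
  LinearMap.mk₂ F (fun x y => (∑ i, x.1 i * y.1 i) + ∑ i, x.2 i * y.2 i)
    (fun x x' y => by
      simp only [Prod.fst_add, Prod.snd_add, Pi.add_apply, add_mul, Finset.sum_add_distrib]
      ring)
    (fun c x y => by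
      simp only [Prod.smul_fst, Prod.smul_snd, Pi.smul_apply, smul_eq_mul, Finset.mul_sum,
        mul_assoc, mul_add])
    (fun x y y' => by
      simp only [Prod.fst_add, Prod.snd_add, Pi.add_apply, mul_add, Finset.sum_add_distrib]
      ring)
    (fun c x y => by
      simp only [Prod.smul_fst, Prod.smul_snd, Pi.smul_apply, smul_eq_mul, Finset.mul_sum,
        mul_add]
      congr 1 <;> exact Finset.sum_congr rfl fun i _ => by ring)

lemma dotB_apply {F : Type*} [Field F] {n : ℕ} (x y : (Fin n → F) × (Fin n → F)) :
    dotB F n x y = (∑ i, x.1 i * y.1 i) + ∑ i, x.2 i * y.2 i := rfl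

lemma dotB_symm {F : Type*} [Field F] {n : ℕ} (x y : (Fin n → F) × (Fin n → F)) :
    dotB F n x y = dotB F n y x := by
  simp only [dotB_apply, mul_comm]

lemma dotB_refl {F : Type*} [Field F] {n : ℕ} : (dotB F n).IsRefl := by
  intro x y hxy
  rwa [dotB_symm]

lemma dotB_nondeg {F : Type*} [Field F] {n : ℕ} : (dotB F n).Nondegenerate := by
  refine (LinearMap.IsRefl.nondegenerate_iff_separatingLeft (B := dotB F n)
    (fun x y hxy => dotB_refl x y hxy)).mpr ?_
  intro x hx
  have h1 : ∀ i, x.1 i = 0 := by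
    intro i
    have := hx (Pi.single i 1, 0)
    simpa [dotB_apply, Pi.single_apply, mul_ite, Finset.sum_ite_eq'] using this
  have h2 : ∀ i, x.2 i = 0 := by
    intro i
    have := hx (0, Pi.single i 1)
    simpa [dotB_apply, Pi.single_apply, mul_ite, Finset.sum_ite_eq'] using this
  exact Prod.ext (funext h1) (funext h2)


end Stmt18
theorem stmt_18 {F : Type*} [Field F] [Fintype F] {p ℓ h n : ℕ} [NeZero n]
    (hp : p.Prime) (hcard : Fintype.card F = p ^ ℓ) (hh : h < ℓ)
    (hn : Nat.gcd n (p ^ ℓ) = 1)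
    (lam : F) (hlam : lam ≠ 0) (hlam1 : lam ^ (1 + p ^ h) = 1)
    (ι : (Fin n → F) ≃ₗ[F] Rlam F n lam)
    (hι : ∀ v : Fin n → F,
      ι v = Ideal.Quotient.mk _ (∑ i : Fin n, C (v i) * (X : F[X]) ^ (i : ℕ)))
    (σ : Rlam F n lam → Rlam F n lam)
    (hσ : ∀ f : F[X],
      σ (Ideal.Quotient.mk _ f) =
        Ideal.Quotient.mk _
          (f.sum fun i a => C (a ^ p ^ h) * X ^ ((n * orderOf lam - 1) * i)))
    (a a' b g : Rlam F n lam)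
    (hab : a * b = 0) (ha'b : a' * b = 0)
    (hg : g ∈ Ideal.span {b})
    (hgu : ∃ g' ∈ Ideal.span {b}, ∀ c ∈ Ideal.span {b}, c * (g * g') = c)
    (CM : Submodule F ((Fin n → F) × (Fin n → F)))
    (hCM : (CM : Set ((Fin n → F) × (Fin n → F))) =
      {x | ∃ u v w : Rlam F n lam,
        x = (ι.symm (u * a + w * b), ι.symm (v * a' + w * (b * g)))}) :
    (CM : Set ((Fin n → F) × (Fin n → F))) = {y | ∀ c ∈ CM, gin (p ^ h) c y = 0} ↔
      (Module.finrank F CM = n ∧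
       a * σ a = 0 ∧ a' * σ a' = 0 ∧ a * σ b = 0 ∧ σ a * b = 0 ∧
       a' * σ b = 0 ∧ σ a' * b = 0 ∧ b * σ b * (1 + g * σ g) = 0) := by
  classical
  obtain ⟨g', hg'mem, hg'⟩ := hgu
  have hbgg' : b * (g * g') = b := hg' b (Ideal.mem_span_singleton_self b)
  have hl0 : ℓ ≠ 0 := by omega
  haveI hch : CharP F p := Stmt18.charP_of_card hp hcard hl0
  haveI : Fact p.Prime := ⟨hp⟩
  haveI : ExpChar F p := ExpChar.prime hp
  have hφ : ∀ x y : F, (x + y) ^ p ^ h = x ^ p ^ h + y ^ p ^ h := fun x y =>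
    add_pow_char_pow x y p h
  have hp0 : p ^ h ≠ 0 := pow_ne_zero h hp.ne_zero
  have hq1 : 1 < Fintype.card F := Fintype.one_lt_card
  have hfin : IsOfFinOrder lam := isOfFinOrder_iff_pow_eq_one.mpr
    ⟨Fintype.card F - 1, by omega, FiniteField.pow_card_sub_one_eq_one lam hlam⟩
  have ht : 0 < orderOf lam := hfin.orderOf_pos
  have hl1 : lam ^ orderOf lam = 1 := pow_orderOf_eq_one lam
  have hn0 : 0 < n := Nat.pos_of_ne_zero (NeZero.ne n)
  have σadd := Stmt18.sigma_add σ hσ hφ hp0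
  have σmul := Stmt18.sigma_mul σ hσ hφ hp0
  have σzero := Stmt18.sigma_zero σ hσ hφ hp0
  have key2 := Stmt18.key2 ι hι σ hσ hφ hp0 ht hl1
  have nondeg := Stmt18.nondeg ι hι hlam
  have nondegS : ∀ z : Rlam F n lam,
      (∀ k : ℕ, ι.symm (σ (Ideal.Quotient.mk (Ideal.span {(X : F[X]) ^ n - C lam})
        ((X : F[X]) ^ k)) * z) 0 = 0) → z = 0 := by
    intro z hz
    apply nondeg
    intro r hr
    have h1 := hz ((n - r) % n)
    rw [Stmt18.sigma_X_pow σ hσ hφ hp0, Stmt18.mk_X_pow lam, Stmt18.nat_twist ht hr,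
      ← Stmt18.smul_mk, smul_mul_assoc, map_smul, Pi.smul_apply, smul_eq_mul] at h1
    rcases mul_eq_zero.mp h1 with h2 | h2
    · exact absurd h2 (pow_ne_zero _ hlam)
    · exact h2
  set SS : Set ((Fin n → F) × (Fin n → F)) := {y | ∀ c ∈ CM, gin (p ^ h) c y = 0} with hSS
  have hmem : ∀ x, x ∈ (CM : Set ((Fin n → F) × (Fin n → F))) ↔
      ∃ u v w : Rlam F n lam,
        x = (ι.symm (u * a + w * b), ι.symm (v * a' + w * (b * g))) := by
    intro x; rw [hCM]; exact Iff.rfl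
  -- the self-orthogonality condition, in ring form
  have hPiff : ((CM : Set ((Fin n → F) × (Fin n → F))) ⊆ SS) ↔
      ∀ u v w u' v' w' : Rlam F n lam,
        ι.symm ((u * a + w * b) * σ (u' * a + w' * b) +
          (v * a' + w * (b * g)) * σ (v' * a' + w' * (b * g))) 0 = 0 := by
    constructor
    · intro hs u v w u' v' w'
      have h1 : (ι.symm (u' * a + w' * b), ι.symm (v' * a' + w' * (b * g))) ∈
          (CM : Set ((Fin n → F) × (Fin n → F))) := (hmem _).mpr ⟨u', v', w', rfl⟩
      have h2 := hs h1
      rw [hSS, Set.mem_setOf_eq] at h2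
      have h3 : (ι.symm (u * a + w * b), ι.symm (v * a' + w * (b * g))) ∈ CM :=
        SetLike.mem_coe.mp ((hmem _).mpr ⟨u, v, w, rfl⟩)
      have h4 := h2 _ h3
      rwa [key2] at h4
    · intro hP x hx c hc
      obtain ⟨u', v', w', rfl⟩ := (hmem x).mp hx
      obtain ⟨u, v, w, rfl⟩ := (hmem c).mp (SetLike.mem_coe.mpr hc)
      rw [key2]
      exact hP u v w u' v' w'
  -- equivalence of self-orthogonality with the ring conditions
  have hcond : ((CM : Set ((Fin n → F) × (Fin n → F))) ⊆ SS) ↔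
      (a * σ a = 0 ∧ a' * σ a' = 0 ∧ a * σ b = 0 ∧ σ a * b = 0 ∧
       a' * σ b = 0 ∧ σ a' * b = 0 ∧ b * σ b * (1 + g * σ g) = 0) := by
    rw [hPiff]
    constructor
    · intro hP
      have c1 : a * σ a = 0 := by
        apply nondeg
        intro r hr
        have h1 := hP (Ideal.Quotient.mk _ ((X : F[X]) ^ r)) 0 0 1 0 0
        simp only [zero_mul, add_zero, zero_add, one_mul, mul_zero, σzero] at h1
        rwa [mul_assoc] at h1
      have c2 : a' * σ a' = 0 := by
        apply nondeg
        intro r hr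
        have h1 := hP 0 (Ideal.Quotient.mk _ ((X : F[X]) ^ r)) 0 0 1 0
        simp only [zero_mul, add_zero, zero_add, one_mul, mul_zero, σzero] at h1
        rwa [mul_assoc] at h1
      have c3 : a * σ b = 0 := by
        apply nondeg
        intro r hr
        have h1 := hP (Ideal.Quotient.mk _ ((X : F[X]) ^ r)) 0 0 0 0 1
        simp only [zero_mul, add_zero, zero_add, one_mul, mul_zero, σzero] at h1
        rwa [mul_assoc] at h1
      have c4 : σ a * b = 0 := by
        apply nondegS
        intro k
        have h1 := hP 0 0 1 (Ideal.Quotient.mk _ ((X : F[X]) ^ k)) 0 0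
        simp only [zero_mul, add_zero, zero_add, one_mul, mul_zero, σzero] at h1
        rw [σmul] at h1
        have hre : b * (σ (Ideal.Quotient.mk (Ideal.span {(X : F[X]) ^ n - C lam})
            ((X : F[X]) ^ k)) * σ a) =
            σ (Ideal.Quotient.mk (Ideal.span {(X : F[X]) ^ n - C lam})
            ((X : F[X]) ^ k)) * (σ a * b) := by ring
        rwa [hre] at h1
      have c5' : a' * σ (b * g) = 0 := by
        apply nondeg
        intro r hr
        have h1 := hP 0 (Ideal.Quotient.mk _ ((X : F[X]) ^ r)) 0 0 0 1
        simp only [zero_mul, add_zero, zero_add, one_mul, mul_zero, σzero] at h1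
        rwa [mul_assoc] at h1
      have c5 : a' * σ b = 0 := by
        have hb2 : σ b = σ (b * g) * σ g' := by
          conv_lhs => rw [← hbgg', ← mul_assoc]
          rw [σmul]
        rw [hb2, ← mul_assoc, c5', zero_mul]
      have c6' : σ a' * (b * g) = 0 := by
        apply nondegS
        intro k
        have h1 := hP 0 0 1 0 (Ideal.Quotient.mk _ ((X : F[X]) ^ k)) 0
        simp only [zero_mul, add_zero, zero_add, one_mul, mul_zero, σzero] at h1
        rw [σmul] at h1
        have hre : b * g * (σ (Ideal.Quotient.mk (Ideal.span {(X : F[X]) ^ n - C lam})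
            ((X : F[X]) ^ k)) * σ a') =
            σ (Ideal.Quotient.mk (Ideal.span {(X : F[X]) ^ n - C lam})
            ((X : F[X]) ^ k)) * (σ a' * (b * g)) := by ring
        rwa [hre] at h1
      have c6 : σ a' * b = 0 := by
        have hre2 : σ a' * b = σ a' * (b * g) * g' := by
          conv_lhs => rw [← hbgg']
          ring
        rw [hre2, mul_assoc, ← mul_assoc, c6', zero_mul]
      have c8 : b * σ b * (1 + g * σ g) = 0 := by
        apply nondeg
        intro r hr
        have h1 := hP 0 0 (Ideal.Quotient.mk _ ((X : F[X]) ^ r)) 0 0 1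
        simp only [zero_mul, add_zero, zero_add, one_mul, mul_zero, σzero] at h1
        rw [σmul] at h1
        have hre : Ideal.Quotient.mk (Ideal.span {(X : F[X]) ^ n - C lam})
              ((X : F[X]) ^ r) * b * σ b +
            Ideal.Quotient.mk (Ideal.span {(X : F[X]) ^ n - C lam})
              ((X : F[X]) ^ r) * (b * g) * (σ b * σ g) =
            Ideal.Quotient.mk (Ideal.span {(X : F[X]) ^ n - C lam})
              ((X : F[X]) ^ r) * (b * σ b * (1 + g * σ g)) := by ring
        rwa [hre] at h1
      exact ⟨c1, c2, c3, c4, c5, c6, c8⟩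
    · rintro ⟨c1, c2, c3, c4, c5, c6, c8⟩ u v w u' v' w'
      have hz : (u * a + w * b) * σ (u' * a + w' * b) +
          (v * a' + w * (b * g)) * σ (v' * a' + w' * (b * g)) = 0 := by
        rw [σadd, σadd]
        simp only [σmul]
        linear_combination (u * σ u') * c1 + (u * σ w') * c3 + (w * σ u') * c4
          + (v * σ v') * c2 + (v * (σ w' * σ g)) * c5 + (w * (σ v' * g)) * c6
          + (w * σ w') * c8
      rw [hz, map_zero]
      rfl
  -- cardinality comparison
  let eF : F ≃ F := Equiv.ofBijective (fun x : F => x ^ p ^ h) (by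
    rw [← Finite.injective_iff_bijective]
    intro x y hxy
    apply (iterateFrobenius F p h).injective
    rwa [iterateFrobenius_def, iterateFrobenius_def])
  let ψe : ((Fin n → F) × (Fin n → F)) ≃ ((Fin n → F) × (Fin n → F)) :=
    (Equiv.piCongrRight fun _ : Fin n => eF).prodCongr (Equiv.piCongrRight fun _ : Fin n => eF)
  set T := (Stmt18.dotB F n).orthogonal CM with hT
  have hSpre : SS = ψe ⁻¹' (T : Set ((Fin n → F) × (Fin n → F))) := by
    ext y
    rw [hSS]
    simp only [Set.mem_setOf_eq, Set.mem_preimage, SetLike.mem_coe, hT,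
      LinearMap.BilinForm.mem_orthogonal_iff]
    refine forall₂_congr fun c hc => ?_
    have hgd : gin (p ^ h) c y = Stmt18.dotB F n c (ψe y) := rfl
    show gin (p ^ h) c y = 0 ↔ (Stmt18.dotB F n) c (ψe y) = 0
    rw [hgd]
  have hcardsub : ∀ W : Submodule F ((Fin n → F) × (Fin n → F)),
      Nat.card ↥W = Fintype.card F ^ Module.finrank F W := by
    intro W
    haveI : Fintype ↥W := Fintype.ofFinite _
    rw [Nat.card_eq_fintype_card]
    exact Module.card_eq_pow_finrank
  have hfinT : Module.finrank F ↥T = n + n - Module.finrank F ↥CM := by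
    rw [hT, LinearMap.BilinForm.finrank_orthogonal Stmt18.dotB_nondeg CM,
      Module.finrank_prod, Module.finrank_fin_fun]
  have hcardS : Nat.card ↥SS = Fintype.card F ^ (n + n - Module.finrank F ↥CM) := by
    have himg : ψe.symm '' (T : Set ((Fin n → F) × (Fin n → F))) =
        ψe ⁻¹' (T : Set ((Fin n → F) × (Fin n → F))) := by
      rw [Equiv.image_eq_preimage_symm, Equiv.symm_symm]
    rw [hSpre, ← himg, Nat.card_coe_set_eq,
      Set.ncard_image_of_injective _ ψe.symm.injective, ← Nat.card_coe_set_eq]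
    have : Nat.card ↥(T : Set ((Fin n → F) × (Fin n → F))) = Nat.card ↥T := rfl
    rw [this, hcardsub T, hfinT]
  have hcardCM : Nat.card ↥(CM : Set ((Fin n → F) × (Fin n → F))) =
      Fintype.card F ^ Module.finrank F ↥CM := by
    have : Nat.card ↥(CM : Set ((Fin n → F) × (Fin n → F))) = Nat.card ↥CM := rfl
    rw [this, hcardsub CM]
  constructor
  · intro hEq
    have hsub : (CM : Set ((Fin n → F) × (Fin n → F))) ⊆ SS := hEq.le
    have hcc : Nat.card ↥(CM : Set ((Fin n → F) × (Fin n → F))) = Nat.card ↥SS := by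
      rw [hEq]
    rw [hcardCM, hcardS] at hcc
    have hdd := Nat.pow_right_injective hq1 hcc
    have hle : Module.finrank F ↥CM ≤ n + n := by
      have := Submodule.finrank_le CM
      rwa [Module.finrank_prod, Module.finrank_fin_fun] at this
    have hd : Module.finrank F ↥CM = n := by omega
    exact ⟨hd, hcond.mp hsub⟩
  · rintro ⟨hd, hrest⟩
    have hsub : (CM : Set ((Fin n → F) × (Fin n → F))) ⊆ SS := hcond.mpr hrest
    apply Set.eq_of_subset_of_ncard_le hsub ?_ (Set.toFinite _)
    rw [← Nat.card_coe_set_eq, ← Nat.card_coe_set_eq, hcardS, hcardCM, hd]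
    have h2n : n + n - n = n := by omega
    rw [h2n]
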